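/- Let n ≥ 2 be an integer, σ ≥ 0, R' > 0, and suppose a > 0 and A ≥ 0 satisfy a*(1 + 1/(n-1)) ≤ sqrt(n*(n + σ*(A + a')))/(2R') where a' = sqrt(n*(n + σ*A))/(2R') and a = a'. Then a ≤ n*(n-1)^2*σ/((2R')^2*(2n-1)). -/

import Mathlib

theorem stmt_16 (n : ℕ) (hn : 2 ≤ n) (σ R' : ℝ) (hσ : 0 ≤ σ) (hR' : 0 < R')
    (a A : ℝ) (ha : 0 < a) (hA : 0 ≤ A)
    (haval : a = Real.sqrt (n * (n + σ * A)) / (2 * R'))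
    (h : a * (1 + 1 / ((n : ℝ) - 1)) ≤
      Real.sqrt (n * (n + σ * (A + a))) / (2 * R')) :
    a ≤ n * ((n : ℝ) - 1) ^ 2 * σ / ((2 * R') ^ 2 * (2 * n - 1)) := by
  have hN : (2 : ℝ) ≤ (n : ℝ) := by exact_mod_cast hn
  set N := (n : ℝ) with hNdef
  have hN1 : (0 : ℝ) < N - 1 := by linarith
  have hc : (0 : ℝ) < 2 * R' := by linarith
  have hX : (0 : ℝ) ≤ N * (N + σ * A) := by positivity
  have hX' : (0 : ℝ) ≤ N * (N + σ * (A + a)) := by positivity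
  have ha2 : a ^ 2 * (2 * R') ^ 2 = N * (N + σ * A) := by
    have : a * (2 * R') = Real.sqrt (N * (N + σ * A)) := by
      rw [haval]; field_simp
    calc a ^ 2 * (2 * R') ^ 2 = (a * (2 * R')) ^ 2 := by ring
      _ = N * (N + σ * A) := by rw [this, Real.sq_sqrt hX]
  have hL : 0 ≤ a * (1 + 1 / (N - 1)) := by positivity
  have h2 : (a * (1 + 1 / (N - 1))) ^ 2 * (2 * R') ^ 2 ≤ N * (N + σ * (A + a)) := by
    have h' : a * (1 + 1 / (N - 1)) * (2 * R') ≤ Real.sqrt (N * (N + σ * (A + a))) := by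
      rw [le_div_iff₀ hc] at h; linarith
    have h2' := mul_self_le_mul_self (by positivity) h'
    rw [Real.mul_self_sqrt hX'] at h2'
    nlinarith [h2']
  rw [le_div_iff₀ (mul_pos (pow_pos hc 2) (by linarith : (0:ℝ) < 2 * N - 1))]
  have hfrac : (1 + 1 / (N - 1)) = N / (N - 1) := by field_simp; ring
  rw [hfrac] at h2
  have key : a ^ 2 * (N / (N - 1)) ^ 2 * (2 * R') ^ 2 ≤ N * (N + σ * (A + a)) := by
    nlinarith [h2]
  have hdiv : (N / (N - 1)) ^ 2 * (N - 1) ^ 2 = N ^ 2 := by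
    field_simp
  nlinarith [key, ha2, mul_pos (mul_pos ha ha) (pow_pos hc 2), sq_nonneg (N - 1),
    mul_le_mul_of_nonneg_right key (sq_nonneg (N - 1))]
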